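/- Let X be a real normed space, let τ > 6, and let x be a nonempty finite subset of X with diam(x) = 1 such that there exists a nonempty set z ⊆ X with at most 2 elements and d_H(x, z) < 1/τ. Then there exist nonempty sets x', x'' with x = x' ∪ x'', x' ∩ x'' = ∅, diam(x') ≤ 2/τ, diam(x'') ≤ 2/τ, and dist(x', x'') ≥ 1 − 4/τ. Moreover, this decomposition is unique up to interchanging the two pieces: if y', y'' is any other pair of nonempty sets with x = y' ∪ y'', y' ∩ y'' = ∅, diam(y') ≤ 2/τ, diam(y'') ≤ 2/τ and dist(y', y'') ≥ 1 − 4/τ, then {y', y''} = {x', x''}. -/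

import Mathlib

open Metric Bornology

/-- Uniqueness part: a separated decomposition is determined once one point is placed. -/
lemma stmt_9_aux {X : Type*} [PseudoMetricSpace X] {x A B C D : Set X}
    (hxb : IsBounded x)
    (hABu : x = A ∪ B) (hCDu : x = C ∪ D) (hCDd : C ∩ D = ∅)
    {d s : ℝ} (hds : d < s)
    (hdA : Metric.diam A ≤ d) (hdB : Metric.diam B ≤ d)
    (hdC : Metric.diam C ≤ d)
    (hsAB : ∀ a ∈ A, ∀ b ∈ B, s ≤ dist a b)
    (hsCD : ∀ a ∈ C, ∀ b ∈ D, s ≤ dist a b)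
    {a0 b0 : X} (ha0A : a0 ∈ A) (hb0B : b0 ∈ B) (ha0C : a0 ∈ C) :
    C = A ∧ D = B := by
  have hAb : IsBounded A := hxb.subset (hABu ▸ Set.subset_union_left)
  have hBb : IsBounded B := hxb.subset (hABu ▸ Set.subset_union_right)
  have hCb : IsBounded C := hxb.subset (hCDu ▸ Set.subset_union_left)
  -- b0 ∈ D
  have hb0D : b0 ∈ D := by
    have hb0x : b0 ∈ x := hABu ▸ Set.mem_union_right _ hb0B
    rcases (hCDu ▸ hb0x : b0 ∈ C ∪ D) with h | h
    · have h1 : dist a0 b0 ≤ d := le_trans (dist_le_diam_of_mem hCb ha0C h) hdC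
      have h2 : s ≤ dist a0 b0 := hsAB a0 ha0A b0 hb0B
      linarith
    · exact h
  -- A ⊆ C
  have hAC : A ⊆ C := by
    intro a ha
    have hax : a ∈ x := hABu ▸ Set.mem_union_left _ ha
    rcases (hCDu ▸ hax : a ∈ C ∪ D) with h | h
    · exact h
    · have h1 : dist a0 a ≤ d := le_trans (dist_le_diam_of_mem hAb ha0A ha) hdA
      have h2 : s ≤ dist a0 a := hsCD a0 ha0C a h
      linarith
  -- B ⊆ D
  have hBD : B ⊆ D := by
    intro b hb
    have hbx : b ∈ x := hABu ▸ Set.mem_union_right _ hb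
    rcases (hCDu ▸ hbx : b ∈ C ∪ D) with h | h
    · have h1 : dist b b0 ≤ d := le_trans (dist_le_diam_of_mem hBb hb hb0B) hdB
      have h2 : s ≤ dist b b0 := hsCD b h b0 hb0D
      linarith
    · exact h
  constructor
  · apply Set.Subset.antisymm _ hAC
    intro c hc
    have hcx : c ∈ x := hCDu ▸ Set.mem_union_left _ hc
    rcases (hABu ▸ hcx : c ∈ A ∪ B) with h | h
    · exact h
    · exact absurd (Set.mem_inter hc (hBD h)) (by simp [hCDd])
  · apply Set.Subset.antisymm _ hBD
    intro e he
    have hex : e ∈ x := hCDu ▸ Set.mem_union_right _ he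
    rcases (hABu ▸ hex : e ∈ A ∪ B) with h | h
    · exact absurd (Set.mem_inter (hAC h) he) (by simp [hCDd])
    · exact h

/-- Cluster decomposition of a 2-thin set: a normalized finite set within Hausdorff
distance `1/τ` of a two-point set admits a `(2/τ, 1 - 4/τ)`-decomposition, which is
unique up to interchanging the two clusters. -/
theorem stmt_9 {X : Type*} [NormedAddCommGroup X] [NormedSpace ℝ X]
    (τ : ℝ) (hτ : 6 < τ) (x : Set X) (hxfin : x.Finite) (hxne : x.Nonempty)
    (hxdiam : Metric.diam x = 1)
    (hthin : ∃ z : Set X, z.Nonempty ∧ z.encard ≤ 2 ∧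
      Metric.hausdorffDist x z < 1 / τ) :
    ∃ x' x'' : Set X, x'.Nonempty ∧ x''.Nonempty ∧ x = x' ∪ x'' ∧ x' ∩ x'' = ∅ ∧
      Metric.diam x' ≤ 2 / τ ∧ Metric.diam x'' ≤ 2 / τ ∧
      (∀ a ∈ x', ∀ b ∈ x'', 1 - 4 / τ ≤ dist a b) ∧
      (∀ y' y'' : Set X, y'.Nonempty → y''.Nonempty → x = y' ∪ y'' → y' ∩ y'' = ∅ →
        Metric.diam y' ≤ 2 / τ → Metric.diam y'' ≤ 2 / τ →
        (∀ a ∈ y', ∀ b ∈ y'', 1 - 4 / τ ≤ dist a b) →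
        (y' = x' ∧ y'' = x'') ∨ (y' = x'' ∧ y'' = x')) := by
  have hτ0 : (0:ℝ) < τ := by linarith
  have e2 : (2:ℝ)/τ = 1/τ + 1/τ := by ring
  have e4 : (4:ℝ)/τ = 1/τ + 1/τ + 1/τ + 1/τ := by ring
  have e6 : (6:ℝ)/τ = 2/τ + 4/τ := by ring
  have h6τ : (6:ℝ)/τ < 1 := by rw [div_lt_one hτ0]; linarith
  obtain ⟨z, hzne, hzcard, hzdist⟩ := hthin
  have hxb : IsBounded x := hxfin.isBounded
  have hzfin : z.Finite := Set.finite_of_encard_le_coe (by exact_mod_cast hzcard)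
  have hedist : EMetric.hausdorffEdist x z ≠ ⊤ :=
    Metric.hausdorffEdist_ne_top_of_nonempty_of_bounded hxne hzne hxb hzfin.isBounded
  -- obtain p, q with z ⊆ {p, q}
  obtain ⟨p, hp⟩ := hzne
  obtain ⟨q, hzpq⟩ : ∃ q, z ⊆ {p, q} := by
    have h1 : (z \ {p}).encard + 1 = z.encard := Set.encard_diff_singleton_add_one hp
    have h2 : (z \ {p}).encard ≤ 1 := by
      have : (z \ {p}).encard + 1 ≤ 1 + 1 := by rw [h1]; exact_mod_cast hzcard
      exact_mod_cast ENat.add_le_add_iff_right ENat.one_ne_top |>.mp this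
    rcases Set.encard_le_one_iff_eq.mp h2 with h | ⟨q, hq⟩
    · refine ⟨p, fun a ha => ?_⟩
      left
      by_contra hne
      exact Set.eq_empty_iff_forall_notMem.mp h a ⟨ha, hne⟩
    · refine ⟨q, fun a ha => ?_⟩
      by_cases hap : a = p
      · exact Or.inl hap
      · exact Or.inr (by have : a ∈ z \ {p} := ⟨ha, hap⟩; rw [hq] at this; exact this)
  -- every point of x is close to p or to q
  have hmem : ∀ a ∈ x, dist a p < 1 / τ ∨ dist a q < 1 / τ := by
    intro a ha
    obtain ⟨y, hy, hdy⟩ := Metric.exists_dist_lt_of_hausdorffDist_lt ha hzdist hedist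
    rcases hzpq hy with h | h
    · left; rwa [← h]
    · right; rwa [← (by exact h : y = q)]
  set A : Set X := {a ∈ x | dist a p < 1 / τ} with hA
  set B : Set X := {a ∈ x | ¬ dist a p < 1 / τ} with hB
  have hAx : A ⊆ x := fun a ha => ha.1
  have hBx : B ⊆ x := fun a ha => ha.1
  have hBq : ∀ a ∈ B, dist a q < 1 / τ := by
    intro a ha
    rcases hmem a ha.1 with h | h
    · exact absurd h ha.2
    · exact h
  have hAb : IsBounded A := hxb.subset hAx
  have hBb : IsBounded B := hxb.subset hBx
  have hunion : x = A ∪ B := by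
    ext a; simp only [hA, hB, Set.mem_union, Set.mem_setOf_eq]; tauto
  have hinter : A ∩ B = ∅ := by
    ext a; simp only [hA, hB, Set.mem_inter_iff, Set.mem_setOf_eq]; tauto
  have hdiamA : Metric.diam A ≤ 2 / τ := by
    apply Metric.diam_le_of_forall_dist_le (by positivity)
    intro a ha b hb
    have := dist_triangle a p b
    have h1 : dist p b = dist b p := dist_comm p b
    have := ha.2; have := hb.2
    linarith [ha.2, hb.2, dist_triangle a p b, dist_comm p b ▸ (rfl : dist p b = dist p b)]
  have hdiamB : Metric.diam B ≤ 2 / τ := by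
    apply Metric.diam_le_of_forall_dist_le (by positivity)
    intro a ha b hb
    have h1 := hBq a ha
    have h2 := hBq b hb
    have h3 := dist_triangle a q b
    have h4 : dist q b = dist b q := dist_comm q b
    linarith
  -- distance between p and q
  have hpq : 1 - 2 / τ ≤ dist p q := by
    have hdle : Metric.diam x ≤ dist p q + 2 / τ := by
      apply Metric.diam_le_of_forall_dist_le (by positivity)
      intro a ha b hb
      have hd0 : (0:ℝ) ≤ dist p q := dist_nonneg
      rcases hmem a ha with h1 | h1 <;> rcases hmem b hb with h2 | h2
      · have := dist_triangle a p b
        have := dist_comm p b ▸ (dist_triangle a p b)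
        calc dist a b ≤ dist a p + dist p b := dist_triangle a p b
          _ = dist a p + dist b p := by rw [dist_comm p b]
          _ ≤ dist p q + 2 / τ := by linarith
      · calc dist a b ≤ dist a p + dist p q + dist q b := dist_triangle4 a p q b
          _ = dist a p + dist p q + dist b q := by rw [dist_comm q b]
          _ ≤ dist p q + 2 / τ := by linarith
      · calc dist a b ≤ dist a q + dist q p + dist p b := dist_triangle4 a q p b
          _ = dist a q + dist p q + dist b p := by rw [dist_comm q p, dist_comm p b]
          _ ≤ dist p q + 2 / τ := by linarith
      · calc dist a b ≤ dist a q + dist q b := dist_triangle a q b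
          _ = dist a q + dist b q := by rw [dist_comm q b]
          _ ≤ dist p q + 2 / τ := by linarith
    rw [hxdiam] at hdle; linarith
  -- separation
  have hsep : ∀ a ∈ A, ∀ b ∈ B, 1 - 4 / τ ≤ dist a b := by
    intro a ha b hb
    have h1 : dist p q ≤ dist p a + dist a b + dist b q := dist_triangle4 p a b q
    have h2 : dist p a = dist a p := dist_comm p a
    have h3 := ha.2
    have h4 := hBq b hb
    linarith
  -- nonemptiness: there are two far-apart points
  obtain ⟨a1, ha1, b1, hb1, hfar⟩ : ∃ a ∈ x, ∃ b ∈ x, 2 / τ < dist a b := by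
    by_contra h
    push_neg at h
    have : Metric.diam x ≤ 2 / τ := Metric.diam_le_of_forall_dist_le (by positivity) h
    rw [hxdiam] at this
    have : (2:ℝ) / τ < 1 := by rw [div_lt_one hτ0]; linarith
    linarith
  have hAne : A.Nonempty := by
    rcases hmem a1 ha1 with h1 | h1
    · exact ⟨a1, ha1, h1⟩
    rcases hmem b1 hb1 with h2 | h2
    · exact ⟨b1, hb1, h2⟩
    · -- both close to q : contradiction with hfar
      exfalso
      have := dist_triangle a1 q b1
      have h4 : dist q b1 = dist b1 q := dist_comm q b1
      linarith
  have hBne : B.Nonempty := by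
    by_cases h1 : dist a1 p < 1 / τ
    · by_cases h2 : dist b1 p < 1 / τ
      · exfalso
        have := dist_triangle a1 p b1
        have h4 : dist p b1 = dist b1 p := dist_comm p b1
        linarith
      · exact ⟨b1, hb1, h2⟩
    · exact ⟨a1, ha1, h1⟩
  obtain ⟨a0, ha0⟩ := hAne
  obtain ⟨b0, hb0⟩ := hBne
  have hds : (2:ℝ) / τ < 1 - 4 / τ := by linarith
  refine ⟨A, B, ⟨a0, ha0⟩, ⟨b0, hb0⟩, hunion, hinter, hdiamA, hdiamB, hsep, ?_⟩
  intro y' y'' hy'ne hy''ne hyu hyd hdy' hdy'' hysep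
  have ha0x : a0 ∈ x := hAx ha0
  rcases (hyu ▸ ha0x : a0 ∈ y' ∪ y'') with h | h
  · left
    exact stmt_9_aux hxb hunion hyu hyd hds hdiamA hdiamB hdy' hsep hysep ha0 hb0 h
  · right
    have hyd' : y'' ∩ y' = ∅ := by rw [Set.inter_comm]; exact hyd
    have hyu' : x = y'' ∪ y' := by rw [Set.union_comm]; exact hyu
    have hysep' : ∀ a ∈ y'', ∀ b ∈ y', 1 - 4 / τ ≤ dist a b := by
      intro a ha b hb; rw [dist_comm]; exact hysep b hb a ha
    have := stmt_9_aux hxb hunion hyu' hyd' hds hdiamA hdiamB hdy'' hsep hysep' ha0 hb0 h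
    exact ⟨this.2, this.1⟩
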